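/- Let M be a representation of the equioriented type A_n quiver over ℂ and let 1 ≤ i ≤ j ≤ n. Then there exists an injective morphism U_{i,j} → M (a morphism all of whose components are injective) if and only if r^M_{i,j} − r^M_{i,j+1} > 0 (with the convention r^M_{i,n+1} := 0). -/

import Mathlib

open Module

/-- A representation of the equioriented type `A_n` quiver over `ℂ`: finite-dimensional
complex vector spaces `V i` (only the indices `1 ≤ i ≤ n` carry content, the spaces at
index `0` and at indices `> n` are required to be trivial) together with linear maps
`f i : V i → V (i+1)`. -/
structure ARep (n : ℕ) where
  V : ℕ → Type
  [instAddCommGroup : ∀ i, AddCommGroup (V i)]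
  [instModule : ∀ i, Module ℂ (V i)]
  [instFiniteDimensional : ∀ i, FiniteDimensional ℂ (V i)]
  f : ∀ i, V i →ₗ[ℂ] V (i + 1)
  triv : ∀ i, i = 0 ∨ n < i → Subsingleton (V i)

attribute [instance] ARep.instAddCommGroup ARep.instModule ARep.instFiniteDimensional

namespace ARep

/-- The composite map `f_{i,i+k} : M_i → M_{i+k}` (the identity for `k = 0`). -/
noncomputable def F {n : ℕ} (M : ARep n) (i : ℕ) : (k : ℕ) → (M.V i →ₗ[ℂ] M.V (i + k))
  | 0 => LinearMap.id
  | (k + 1) => (M.f (i + k)).comp (M.F i k)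

/-- The rank sequence `r^M_{i,j} = rank f_{i,j}`.  (For `i = 0` the source space is
trivial and for `j = n+1` the target space is trivial, so the conventions
`r^M_{0,·} = 0 = r^M_{·,n+1}` hold automatically.) -/
noncomputable def r {n : ℕ} (M : ARep n) (i j : ℕ) : ℕ :=
  Module.finrank ℂ (LinearMap.range (M.F i (j - i)))

end ARep

/-- A morphism of representations of the equioriented type `A_n` quiver. -/
structure ARepHom {n : ℕ} (M N : ARep n) where
  φ : ∀ i, M.V i →ₗ[ℂ] N.V i
  comm : ∀ i, (φ (i + 1)).comp (M.f i) = (N.f i).comp (φ i)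

/-- Two representations are isomorphic if there is a morphism all of whose components
are bijective. -/
def ARepIso {n : ℕ} (M N : ARep n) : Prop :=
  ∃ h : ARepHom M N, ∀ i, Function.Bijective (h.φ i)

/-- The condition for the interval representation `U_{i,j}` to have a nonzero space at
vertex `k`. -/
def Ucond (n i j k : ℕ) : Prop := 1 ≤ k ∧ k ≤ n ∧ i ≤ k ∧ k ≤ j

instance (n i j k : ℕ) : Decidable (Ucond n i j k) := by unfold Ucond; infer_instance

/-- The space of `U_{i,j}` at vertex `k`, realized as a submodule of `ℂ`. -/
noncomputable def Uspace (n i j k : ℕ) : Submodule ℂ ℂ := if Ucond n i j k then ⊤ else ⊥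

/-- The indecomposable interval representation `U_{i,j}` (for `1 ≤ i ≤ j ≤ n`):
one-dimensional at the vertices `i ≤ k ≤ j`, zero elsewhere, with identity structure
maps inside the interval. -/
noncomputable def Urep (n i j : ℕ) : ARep n where
  V k := ↥(Uspace n i j k)
  f k := LinearMap.restrict
    (if Ucond n i j k ∧ Ucond n i j (k + 1) then (LinearMap.id : ℂ →ₗ[ℂ] ℂ) else 0)
    (p := Uspace n i j k) (q := Uspace n i j (k + 1))
    (by
      intro x hx
      by_cases h : Ucond n i j k ∧ Ucond n i j (k + 1)
      · rw [if_pos h]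
        simp [Uspace, if_pos h.2]
      · rw [if_neg h]
        simp)
  triv k hk := by
    have hbot : Uspace n i j k = ⊥ := by
      simp only [Uspace]; rw [if_neg]; unfold Ucond; omega
    have h0 := (Submodule.eq_bot_iff _).mp hbot
    exact ⟨fun a b => Subtype.ext ((h0 a.1 a.2).trans (h0 b.1 b.2).symm)⟩

/-- The componentwise direct sum of two representations. -/
noncomputable def ARep.dsum {n : ℕ} (M N : ARep n) : ARep n where
  V i := M.V i × N.V i
  f i := (M.f i).prodMap (N.f i)
  triv i hi := by
    haveI := M.triv i hi
    haveI := N.triv i hi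
    exact ⟨fun a b => Prod.ext (Subsingleton.elim _ _) (Subsingleton.elim _ _)⟩

/-- A representation is nonzero if some vector space is nonzero. -/
def ARep.Nonzero {n : ℕ} (M : ARep n) : Prop := ∃ i, ∃ v : M.V i, v ≠ 0

/-- The index set of segments `1 ≤ i ≤ j ≤ n`. -/
def SegIdx (n : ℕ) : Type :=
  {p : Fin (n + 1) × Fin (n + 1) // 1 ≤ p.1.1 ∧ p.1.1 ≤ p.2.1}

instance (n : ℕ) : Fintype (SegIdx n) := by unfold SegIdx; infer_instance

/-- The direct sum `⊕_{1 ≤ i ≤ j ≤ n} U_{i,j}^{⊕ m i j}`, taken componentwise. -/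
noncomputable def sumU (n : ℕ) (m : ℕ → ℕ → ℕ) : ARep n where
  V k := ∀ p : SegIdx n, Fin (m p.1.1.1 p.1.2.1) → (Urep n p.1.1.1 p.1.2.1).V k
  f k := LinearMap.pi fun p =>
    (((Urep n p.1.1.1 p.1.2.1).f k).compLeft (Fin (m p.1.1.1 p.1.2.1))).comp
      (LinearMap.proj p)
  triv k hk := by
    haveI := fun p : SegIdx n => (Urep n p.1.1.1 p.1.2.1).triv k hk
    exact ⟨fun a b => funext fun p => Subsingleton.elim _ _⟩

/-- The space of morphisms `Hom(M,N)` realized as a subspace of the product of the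
spaces of componentwise linear maps. -/
noncomputable def HomSubspace {n : ℕ} (M N : ARep n) :
    Submodule ℂ (∀ k, M.V k →ₗ[ℂ] N.V k) where
  carrier := {φ | ∀ k, (φ (k + 1)).comp (M.f k) = (N.f k).comp (φ k)}
  add_mem' := by
    intro a b ha hb k
    simp only [Pi.add_apply, LinearMap.add_comp, LinearMap.comp_add, ha k, hb k]
  zero_mem' := by
    intro k
    simp
  smul_mem' := by
    intro c a ha k
    simp only [Pi.smul_apply, LinearMap.smul_comp, LinearMap.comp_smul, ha k]

/-- The quotient of a representation by a family of subspaces stable under the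
structure maps. -/
noncomputable def ARep.quot {n : ℕ} (M : ARep n) (S : ∀ k, Submodule ℂ (M.V k))
    (h : ∀ k, S k ≤ (S (k + 1)).comap (M.f k)) : ARep n where
  V k := M.V k ⧸ S k
  f k := Submodule.mapQ (S k) (S (k + 1)) (M.f k) (h k)
  triv k hk := by
    haveI := M.triv k hk
    refine ⟨fun a b => ?_⟩
    obtain ⟨x, rfl⟩ := Submodule.Quotient.mk_surjective _ a
    obtain ⟨y, rfl⟩ := Submodule.Quotient.mk_surjective _ b
    exact congrArg _ (Subsingleton.elim x y)

/-- The quotient `M / ι(L)` of `M` by the image of a morphism `ι : L → M`. -/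
noncomputable def quotByHom {n : ℕ} {L M : ARep n} (ι : ARepHom L M) : ARep n :=
  M.quot (fun k => LinearMap.range (ι.φ k)) (by
    intro k x hx
    obtain ⟨y, rfl⟩ := hx
    rw [Submodule.mem_comap]
    exact ⟨L.f k y, LinearMap.congr_fun (ι.comm k) y⟩)

/-- The subrepresentation of `M` given by a family of subspaces stable under the
structure maps. -/
noncomputable def ARep.sub {n : ℕ} (M : ARep n) (N : ∀ i, Submodule ℂ (M.V i))
    (h : ∀ i, ∀ x ∈ N i, M.f i x ∈ N (i + 1)) : ARep n where
  V i := ↥(N i)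
  f i := (M.f i).restrict (h i)
  triv i hi := by
    haveI := M.triv i hi
    exact ⟨fun a b => Subtype.ext (Subsingleton.elim _ _)⟩

/-- The subquotient representation `P/S` of `M`, for families of subspaces
`S k ≤ P k` both stable under the structure maps. -/
noncomputable def ARep.subquot {n : ℕ} (M : ARep n) (P S : ∀ k, Submodule ℂ (M.V k))
    (hSP : ∀ k, S k ≤ P k)
    (hP : ∀ k, ∀ x ∈ P k, M.f k x ∈ P (k + 1))
    (hS : ∀ k, ∀ x ∈ S k, M.f k x ∈ S (k + 1)) : ARep n where
  V k := ↥(P k) ⧸ (S k).comap (P k).subtype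
  f k := Submodule.mapQ _ _ ((M.f k).restrict (hP k)) (by
    intro x hx
    rw [Submodule.mem_comap] at hx ⊢
    exact hS k x.1 hx)
  triv k hk := by
    haveI := M.triv k hk
    haveI : Subsingleton (↥(P k)) := ⟨fun a b => Subtype.ext (Subsingleton.elim _ _)⟩
    refine ⟨fun a b => ?_⟩
    obtain ⟨x, rfl⟩ := Submodule.Quotient.mk_surjective _ a
    obtain ⟨y, rfl⟩ := Submodule.Quotient.mk_surjective _ b
    exact congrArg _ (Subsingleton.elim x y)

/-- A `σ`-compatible `ε`-form on the underlying graded vector space of `M` making `M`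
an `ε`-representation: a nondegenerate bilinear form `B` on `M^0 = ⊕_i M_i` with
`B v w = ε B w v`, with `B (M_i) (M_j) = 0` unless `i + j = n + 1` (i.e. `j = σ(i)`),
and anti-compatible with the structure maps. -/
structure EpsForm (n : ℕ) (M : ARep n) (ε : ℂ) where
  B : (∀ i, M.V i) →ₗ[ℂ] (∀ i, M.V i) →ₗ[ℂ] ℂ
  nondeg : ∀ v, (∀ w, B v w = 0) → v = 0
  eps_symm : ∀ v w, B v w = ε * B w v
  graded : ∀ (i j : ℕ) (v : M.V i) (w : M.V j), i + j ≠ n + 1 →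
    B (Pi.single i v) (Pi.single j w) = 0
  compat : ∀ i, 1 ≤ i → i + 1 ≤ n → ∀ (v : M.V i) (w : M.V (n - i)),
    B (Pi.single (i + 1) (M.f i v)) (Pi.single (n - i) w)
      + B (Pi.single i v) (Pi.single (n - i + 1) (M.f (n - i) w)) = 0

/-- The orthogonal complement, at vertex `p`, of the image of a morphism `ι : L → M`
with respect to the form `E`. -/
noncomputable def perpAt {n : ℕ} {L M : ARep n} {ε : ℂ} (E : EpsForm n M ε)
    (ι : ARepHom L M) (p : ℕ) : Submodule ℂ (M.V p) where
  carrier := {y | ∀ (q : ℕ) (x : M.V q), x ∈ LinearMap.range (ι.φ q) →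
    E.B (Pi.single p y) (Pi.single q x) = 0}
  add_mem' := by
    intro a b ha hb q x hx
    rw [Pi.single_add, map_add, LinearMap.add_apply, ha q x hx, hb q x hx, add_zero]
  zero_mem' := by
    intro q x hx
    rw [Pi.single_zero, map_zero, LinearMap.zero_apply]
  smul_mem' := by
    intro c a ha q x hx
    rw [Pi.single_smul, map_smul, LinearMap.smul_apply, ha q x hx, smul_zero]


section AuxProof

lemma ARep.F_succ_apply {n : ℕ} (M : ARep n) (i k : ℕ) (x : M.V i) :
    M.F i (k + 1) x = M.f (i + k) (M.F i k x) := rfl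

lemma ARep.F_add_eq_zero {n : ℕ} (M : ARep n) (i q : ℕ) (x : M.V i)
    (h : M.F i q x = 0) : ∀ r, M.F i (q + r) x = 0 := by
  intro r
  induction r with
  | zero => exact h
  | succ r ih =>
      show M.f (i + (q + r)) (M.F i (q + r) x) = 0
      rw [ih, map_zero]

/-- The family of images of `x : M.V i` down the quiver, zero before `i`. -/
noncomputable def vfam {n : ℕ} (M : ARep n) (i : ℕ) (x : M.V i) : ∀ p, M.V p
  | 0 => 0
  | (p + 1) => if h : i = p + 1 then h ▸ x else if i ≤ p then M.f p (vfam M i x p) else 0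

lemma vfam_self {n : ℕ} (M : ARep n) (i : ℕ) (x : M.V i) (hi : 1 ≤ i) :
    vfam M i x i = x := by
  obtain ⟨p, rfl⟩ : ∃ p, i = p + 1 := ⟨i - 1, by omega⟩
  show dite _ _ _ = x
  rw [dif_pos rfl]

lemma vfam_succ {n : ℕ} (M : ARep n) (i : ℕ) (x : M.V i) {p : ℕ} (hip : i ≤ p) :
    vfam M i x (p + 1) = M.f p (vfam M i x p) := by
  show dite _ _ _ = _
  rw [dif_neg (by omega), if_pos hip]

lemma vfam_F {n : ℕ} (M : ARep n) (i : ℕ) (x : M.V i) (hi : 1 ≤ i) :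
    ∀ k, vfam M i x (i + k) = M.F i k x
  | 0 => vfam_self M i x hi
  | (k + 1) => by
      show vfam M i x ((i + k) + 1) = _
      rw [vfam_succ M i x (Nat.le_add_right i k), vfam_F M i x hi k]
      rfl

/-- The canonical generator of `Uspace` at a vertex where the condition holds. -/
noncomputable def uone (n i j p : ℕ) (h : Ucond n i j p) : ↥(Uspace n i j p) :=
  ⟨1, by simp [Uspace, if_pos h]⟩

lemma Urep_f_val (n i j p : ℕ) (u : ↥(Uspace n i j p)) :
    Subtype.val ((Urep n i j).f p u) =
      (if Ucond n i j p ∧ Ucond n i j (p + 1) then (LinearMap.id : ℂ →ₗ[ℂ] ℂ) else 0)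
        u.val := rfl

open Module in
lemma rank_drop_iff {V W X : Type} [AddCommGroup V] [Module ℂ V] [FiniteDimensional ℂ V]
    [AddCommGroup W] [Module ℂ W] [AddCommGroup X] [Module ℂ X]
    (f : V →ₗ[ℂ] W) (g : W →ₗ[ℂ] X) :
    (∃ x, f x ≠ 0 ∧ g (f x) = 0) ↔
      finrank ℂ (LinearMap.range (g.comp f)) < finrank ℂ (LinearMap.range f) := by
  have hk : LinearMap.ker f ≤ LinearMap.ker (g.comp f) := by
    intro x hx
    simp only [LinearMap.mem_ker] at *
    rw [LinearMap.comp_apply, hx, map_zero]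
  have h1 := f.finrank_range_add_finrank_ker
  have h2 := (g.comp f).finrank_range_add_finrank_ker
  constructor
  · rintro ⟨x, hfx, hgfx⟩
    have hxm : x ∈ LinearMap.ker (g.comp f) := by
      rw [LinearMap.mem_ker, LinearMap.comp_apply, hgfx]
    have hlt : LinearMap.ker f < LinearMap.ker (g.comp f) := by
      refine lt_of_le_of_ne hk ?_
      intro he
      exact hfx (LinearMap.mem_ker.1 (he ▸ hxm))
    have := Submodule.finrank_lt_finrank_of_lt hlt
    omega
  · intro hlt
    have hne : LinearMap.ker f ≠ LinearMap.ker (g.comp f) := by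
      intro he
      rw [he] at h1
      omega
    obtain ⟨x, hx1, hx2⟩ := SetLike.exists_of_lt (lt_of_le_of_ne hk hne)
    refine ⟨x, fun h0 => hx2 (LinearMap.mem_ker.2 h0), ?_⟩
    have := LinearMap.mem_ker.1 hx1
    rwa [LinearMap.comp_apply] at this

end AuxProof

theorem interval_embeds_iff (n : ℕ) (hn : 1 ≤ n) (M : ARep n) (i j : ℕ)
    (h1 : 1 ≤ i) (hij : i ≤ j) (hj : j ≤ n) :
    (∃ ι : ARepHom (Urep n i j) M, ∀ k, Function.Injective (ι.φ k)) ↔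
      0 < (M.r i j : ℤ) - (M.r i (j + 1) : ℤ) := by
  obtain ⟨k, rfl⟩ : ∃ k, j = i + k := ⟨j - i, by omega⟩
  have hr1 : M.r i (i + k) = Module.finrank ℂ (LinearMap.range (M.F i k)) :=
    congrArg (fun m => Module.finrank ℂ (LinearMap.range (M.F i m)))
      (by omega : i + k - i = k)
  have hr2 : M.r i (i + k + 1) = Module.finrank ℂ (LinearMap.range (M.F i (k + 1))) :=
    congrArg (fun m => Module.finrank ℂ (LinearMap.range (M.F i m)))
      (by omega : i + k + 1 - i = k + 1)
  have hcomp : (M.f (i + k)).comp (M.F i k) = M.F i (k + 1) := rfl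
  have key : (∃ ι : ARepHom (Urep n i (i + k)) M, ∀ p, Function.Injective (ι.φ p)) ↔
      ∃ x : M.V i, M.F i k x ≠ 0 ∧ M.f (i + k) (M.F i k x) = 0 := by
    constructor
    · rintro ⟨ι, hinj⟩
      have hUi : Ucond n i (i + k) i := by unfold Ucond; omega
      set x := ι.φ i (uone n i (i + k) i hUi) with hx
      have keyq : ∀ q, ∀ h : Ucond n i (i + k) (i + q),
          M.F i q x = ι.φ (i + q) (uone n i (i + k) (i + q) h) := by
        intro q
        induction q with
        | zero => intro h; rfl
        | succ q ih =>
            intro h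
            have h' : Ucond n i (i + k) (i + q) := by unfold Ucond at *; omega
            have step : M.F i (q + 1) x
                = M.f (i + q) (ι.φ (i + q) (uone n i (i + k) (i + q) h')) := by
              rw [ARep.F_succ_apply, ih h']
            rw [step]
            refine (LinearMap.congr_fun (ι.comm (i + q)) (uone n i (i + k) (i + q) h')).symm.trans ?_
            show ι.φ (i + q + 1) ((Urep n i (i + k)).f (i + q) (uone n i (i + k) (i + q) h')) = _
            congr 1
            apply Subtype.ext
            rw [Urep_f_val, if_pos ⟨h', h⟩]
            rfl
      have hUj : Ucond n i (i + k) (i + k) := by unfold Ucond; omega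
      refine ⟨x, ?_, ?_⟩
      · rw [keyq k hUj]
        intro h0
        exact one_ne_zero (congrArg Subtype.val
          (hinj (i + k) (h0.trans (map_zero (ι.φ (i + k))).symm)))
      · have h4 : (Urep n i (i + k)).f (i + k) (uone n i (i + k) (i + k) hUj) = 0 := by
          apply Subtype.ext
          rw [Urep_f_val, if_neg (by unfold Ucond; omega)]
          rfl
        rw [keyq k hUj]
        refine (LinearMap.congr_fun (ι.comm (i + k)) (uone n i (i + k) (i + k) hUj)).symm.trans ?_
        exact (congrArg (ι.φ (i + k + 1)) h4).trans (map_zero _)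
    · rintro ⟨x, hne, hzero⟩
      refine ⟨⟨fun p => (LinearMap.toSpanSingleton ℂ (M.V p) (vfam M i x p)).comp
          (Uspace n i (i + k) p).subtype, ?_⟩, ?_⟩
      · intro p
        apply LinearMap.ext
        intro u
        show Subtype.val ((Urep n i (i + k)).f p u) • vfam M i x (p + 1)
          = M.f p (u.val • vfam M i x p)
        rw [map_smul]
        refine (congrArg (· • vfam M i x (p + 1)) (Urep_f_val n i (i + k) p u)).trans ?_
        by_cases hc : Ucond n i (i + k) p ∧ Ucond n i (i + k) (p + 1)
        · rw [if_pos hc, vfam_succ M i x hc.1.2.2.1]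
          rfl
        · rw [if_neg hc]
          simp only [LinearMap.zero_apply, zero_smul]
          by_cases hp : Ucond n i (i + k) p
          · have hpj : p = i + k := by
              have hp' := hp
              have hc' := hc
              unfold Ucond at hp' hc'
              omega
            subst hpj
            rw [vfam_F M i x h1 k, hzero, smul_zero]
          · have hs : ∀ c : ℂ, c ∈ Uspace n i (i + k) p → c = 0 := by
              intro c hc2
              rw [show Uspace n i (i + k) p = ⊥ from if_neg hp] at hc2
              exact hc2
            rw [hs u.val u.property, zero_smul]
      · intro p
        by_cases hp : Ucond n i (i + k) p
        · obtain ⟨q, rfl⟩ : ∃ q, p = i + q :=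
            ⟨p - i, by have hp' := hp; unfold Ucond at hp'; omega⟩
          have hq : q ≤ k := by have hp' := hp; unfold Ucond at hp'; omega
          have hvne : vfam M i x (i + q) ≠ 0 := by
            rw [vfam_F M i x h1 q]
            intro h0
            have h5 := M.F_add_eq_zero i q x h0 (k - q)
            rw [show q + (k - q) = k from by omega] at h5
            exact hne h5
          intro a b hab
          apply Subtype.ext
          exact smul_left_injective ℂ hvne hab
        · intro a b _
          apply Subtype.ext
          have hs : ∀ c : ℂ, c ∈ Uspace n i (i + k) p → c = 0 := by
            intro c hc2
            rw [show Uspace n i (i + k) p = ⊥ from if_neg hp] at hc2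
            exact hc2
          rw [hs a.val a.property, hs b.val b.property]
  rw [key, rank_drop_iff (M.F i k) (M.f (i + k))]
  have h6 : M.r i (i + k + 1)
      = Module.finrank ℂ (LinearMap.range ((M.f (i + k)).comp (M.F i k))) :=
    hr2.trans (congrArg (fun g => Module.finrank ℂ (LinearMap.range g)) hcomp.symm)
  omega
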